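/- For 0 < p₀ < 1/2 and x ∈ [p₀, 1-p₀], the binary entropy function satisfies h(x) ≥ h(p₀) + (x - p₀)·log(1/((x+p₀)/2) - 1), where h(t) = -t·log t - (1-t)·log(1-t) and log is base 2. -/

import Mathlib

open Real

private noncomputable def Gfun : ℝ → ℝ := fun t => Real.log (1 - t) - Real.log t

private lemma pairing (a b : ℝ) (ha0 : 0 < a) (hb0 : 0 < b) (hab : a + b ≤ 1) :
    2 * Gfun ((a + b) / 2) ≤ Gfun a + Gfun b := by
  set m := (a + b) / 2 with hm
  have hm0 : 0 < m := by rw [hm]; linarith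
  have ha1 : a < 1 := by linarith
  have hb1 : b < 1 := by linarith
  have hm1 : m < 1 := by rw [hm]; linarith
  have h1a : 0 < 1 - a := by linarith
  have h1b : 0 < 1 - b := by linarith
  have h1m : 0 < 1 - m := by linarith
  have key : (1 - m) * (1 - m) * (a * b) ≤ (1 - a) * (1 - b) * (m * m) := by
    rw [hm]; nlinarith [sq_nonneg (a - b), mul_nonneg (sub_nonneg.2 hab) (sq_nonneg (a-b))]
  have hpos1 : 0 < (1 - m) * (1 - m) * (a * b) :=
    mul_pos (mul_pos h1m h1m) (mul_pos ha0 hb0)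
  have hlog := Real.log_le_log hpos1 key
  rw [Real.log_mul (by positivity) (by positivity), Real.log_mul h1m.ne' h1m.ne',
      Real.log_mul ha0.ne' hb0.ne',
      Real.log_mul (by positivity) (by positivity), Real.log_mul h1a.ne' h1b.ne',
      Real.log_mul hm0.ne' hm0.ne'] at hlog
  simp only [Gfun]
  linarith

private lemma entropy_deriv (t : ℝ) (ht0 : 0 < t) (ht1 : t < 1) :
    HasDerivAt (fun t : ℝ => -t * Real.log t - (1 - t) * Real.log (1 - t)) (Gfun t) t := by
  have h1 : HasDerivAt (fun s : ℝ => s * Real.log s) (Real.log t + 1) t :=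
    Real.hasDerivAt_mul_log (ne_of_gt ht0)
  have h2 : HasDerivAt (fun s : ℝ => (1 - s)) (-1 : ℝ) t := by
    simpa using (hasDerivAt_id t).const_sub 1
  have h3 : HasDerivAt (fun s : ℝ => (1 - s) * Real.log (1 - s))
      ((Real.log (1 - t) + 1) * (-1)) t := by
    have := (Real.hasDerivAt_mul_log (x := 1 - t) (by linarith)).comp t h2
    simpa [Function.comp_def] using this
  have h4 := (h1.neg.sub h3)
  have heq : -(Real.log t + 1) - (Real.log (1 - t) + 1) * (-1) = Gfun t := by
    simp only [Gfun]; ring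
  rw [heq] at h4
  refine h4.congr_of_eventuallyEq (Filter.Eventually.of_forall fun s => ?_)
  simp only [Pi.sub_apply, Pi.neg_apply]; ring

/-- Binary entropy inequality: h(x) ≥ h(p₀) + (x-p₀)·log₂(1/((x+p₀)/2) - 1). -/
theorem binary_entropy_midpoint_tangent_bound
    (p₀ x : ℝ) (h0 : 0 < p₀) (h0' : p₀ < 1/2)
    (hx : p₀ ≤ x) (hx' : x ≤ 1 - p₀) :
    (fun t : ℝ => -t * Real.logb 2 t - (1 - t) * Real.logb 2 (1 - t)) p₀
      + (x - p₀) * Real.logb 2 (1 / ((x + p₀) / 2) - 1)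
      ≤ (fun t : ℝ => -t * Real.logb 2 t - (1 - t) * Real.logb 2 (1 - t)) x := by
  set H : ℝ → ℝ := fun t => -t * Real.log t - (1 - t) * Real.log (1 - t) with hH
  set m : ℝ := (x + p₀) / 2 with hm
  have hm0 : 0 < m := by rw [hm]; linarith
  have hm12 : m ≤ 1/2 := by rw [hm]; linarith
  have hm1 : m < 1 := by linarith
  have hsub : Set.uIcc p₀ x ⊆ Set.Icc p₀ x := by
    rw [Set.uIcc_of_le hx]
  have hGcont : ContinuousOn Gfun (Set.Icc p₀ x) := by
    apply continuousOn_of_forall_continuousAt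
    intro t ht
    have ht0 : 0 < t := lt_of_lt_of_le h0 ht.1
    have ht1 : t < 1 := by linarith [ht.2]
    exact ((Real.continuousAt_log (by linarith : (1:ℝ) - t ≠ 0)).comp
      ((continuous_const.sub continuous_id).continuousAt)).sub
      (Real.continuousAt_log ht0.ne')
  have hGint : IntervalIntegrable Gfun MeasureTheory.volume p₀ x :=
    (hGcont.mono hsub).intervalIntegrable
  have hftc : ∫ t in p₀..x, Gfun t = H x - H p₀ := by
    apply intervalIntegral.integral_eq_sub_of_hasDerivAt
    · intro t ht
      have ht' := hsub ht
      exact entropy_deriv t (by linarith [ht'.1]) (by linarith [ht'.2])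
    · exact hGint
  have hrefl : ∫ t in p₀..x, Gfun (p₀ + x - t) = ∫ t in p₀..x, Gfun t := by
    have := intervalIntegral.integral_comp_sub_left (a := p₀) (b := x) (fun s => Gfun s) (p₀ + x)
    simpa using this
  have hGint2 : IntervalIntegrable (fun t => Gfun (p₀ + x - t)) MeasureTheory.volume p₀ x := by
    apply ContinuousOn.intervalIntegrable
    apply (hGcont.comp (Continuous.continuousOn (by continuity))
      (fun t ht => ?_)).mono hsub
    have h1 := ht.1; have h2 := ht.2
    exact Set.mem_Icc.2 ⟨by linarith, by linarith⟩
  have hptwise : ∀ t ∈ Set.Icc p₀ x, (fun _ : ℝ => 2 * Gfun m) t ≤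
      (fun t => Gfun t + Gfun (p₀ + x - t)) t := by
    intro t ht
    have h1 : 0 < t := lt_of_lt_of_le h0 ht.1
    have h2 : 0 < p₀ + x - t := by linarith [ht.2]
    have h3 : t + (p₀ + x - t) ≤ 1 := by linarith
    have hp := pairing t (p₀ + x - t) h1 h2 h3
    have hmm : (t + (p₀ + x - t)) / 2 = m := by rw [hm]; ring
    rw [hmm] at hp
    exact hp
  have hmono := intervalIntegral.integral_mono_on hx
      (intervalIntegrable_const (c := 2 * Gfun m))
      (((hGcont.mono hsub).intervalIntegrable).add hGint2) hptwise
  rw [intervalIntegral.integral_add ((hGcont.mono hsub).intervalIntegrable) hGint2,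
      hrefl, intervalIntegral.integral_const, hftc] at hmono
  have hkey : H p₀ + (x - p₀) * Gfun m ≤ H x := by
    have hs : (x - p₀) • (2 * Gfun m) = (x - p₀) * Gfun m + (x - p₀) * Gfun m := by
      simp only [smul_eq_mul]; ring
    rw [hs] at hmono
    linarith
  have hlog2 : (0:ℝ) < Real.log 2 := Real.log_pos (by norm_num)
  have hGm : Real.log (1 / m - 1) = Real.log (1 - m) - Real.log m := by
    have h1m : 1 / m - 1 = (1 - m) / m := by field_simp
    rw [h1m, Real.log_div (by linarith) hm0.ne']
  simp only [Real.logb, hGm]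
  have hL : (-p₀ * (Real.log p₀ / Real.log 2) - (1 - p₀) * (Real.log (1 - p₀) / Real.log 2)
      + (x - p₀) * ((Real.log (1 - m) - Real.log m) / Real.log 2))
      = (H p₀ + (x - p₀) * Gfun m) / Real.log 2 := by
    simp only [hH, Gfun]; field_simp
  have hR : (-x * (Real.log x / Real.log 2) - (1 - x) * (Real.log (1 - x) / Real.log 2))
      = H x / Real.log 2 := by
    simp only [hH]; field_simp
  rw [hL, hR]
  exact (div_le_div_iff_of_pos_right hlog2).mpr hkey
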